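/- Let (M, dist) be a metric space and let a ∈ (0,1). Then for all points x, y, z ∈ M one has F_{a;x,y}(z) ≥ (dist(x,z) − a·dist(x,y))². -/
import Mathlib

/-- Three distances function lower bound (Lemma 3.1 of the paper):
in any metric space, for `a ∈ (0,1)`,
`F_{a;x,y}(z) ≥ (dist x z − a·dist x y)²`. -/
theorem three_distances_lower_bound {M : Type*} [MetricSpace M]
    (a : ℝ) (ha : a ∈ Set.Ioo (0:ℝ) 1) (x y z : M) :
    (1 - a) * dist x z ^ 2 + a * dist z y ^ 2 - a * (1 - a) * dist x y ^ 2
      ≥ (dist x z - a * dist x y) ^ 2 := by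
  obtain ⟨ha0, ha1⟩ := ha
  have h1 : dist x y ≤ dist x z + dist z y := dist_triangle x z y
  have h2 : dist x z ≤ dist x y + dist z y := by
    have := dist_triangle x y z
    rw [dist_comm y z] at this; linarith
  have h3 : 0 ≤ dist z y := dist_nonneg
  nlinarith [mul_nonneg ha0.le (mul_nonneg (by linarith : (0:ℝ) ≤ dist z y - dist x y + dist x z) (by linarith : (0:ℝ) ≤ dist z y + dist x y - dist x z))]
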